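/- Let F be a finite set of real polynomials in the two variables k, c such that in every p ∈ F the coefficient of the monomial k·c is zero, and let h : ℕ₊ × ℕ₊ → ℝ be a function such that for all k, c ∈ ℕ₊ there exists p ∈ F with p(k, c) = h(k, c). Then for every ε > 0 there exist k, c ∈ ℕ₊ such that |h(k, c)/(k+1) − kc/(k+1)| > ε. In particular, (k, c) ↦ h(k, c)/(k+1) does not uniformly approximate (k, c) ↦ kc/(k+1). -/

import Mathlib

open MvPolynomial

/-- Pigeonhole: if every element of an infinite set is matched by some member of a
finite set, then some member matches infinitely many elements. -/
lemma aux_pigeon {α β : Type*} (F : Finset β) {S : Set α} (hS : S.Infinite)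
    {Q : β → α → Prop} (h : ∀ a ∈ S, ∃ p ∈ F, Q p a) :
    ∃ p ∈ F, {a | a ∈ S ∧ Q p a}.Infinite := by
  by_contra hc
  push_neg at hc
  have hsub : S ⊆ ⋃ p ∈ F, {a | a ∈ S ∧ Q p a} := by
    intro a ha
    obtain ⟨p, hp, hq⟩ := h a ha
    exact Set.mem_biUnion hp ⟨ha, hq⟩
  exact hS ((Set.Finite.biUnion F.finite_toSet
    (fun p hp => hc p hp)).subset hsub)

open Polynomial in
/-- A real polynomial bounded by a linear function at infinitely many naturals has
degree at most 1. -/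
lemma aux_deg_le_one (f : Polynomial ℝ) (A B : ℝ) (hA : 0 ≤ A) (hB : 0 < B)
    {S : Set ℕ} (hS : S.Infinite) (hf : ∀ n ∈ S, |f.eval (n : ℝ)| ≤ A * n + B) :
    f.natDegree ≤ 1 := by
  by_contra hd
  push_neg at hd
  have hf0 : f ≠ 0 := by rintro rfl; simp at hd
  set L : Polynomial ℝ := Polynomial.C A * Polynomial.X + Polynomial.C B with hLdef
  have hLdeg : (L ^ 2).natDegree ≤ 2 := by
    calc (L ^ 2).natDegree = 2 * L.natDegree := natDegree_pow L 2
    _ ≤ 2 * 1 := by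
        exact Nat.mul_le_mul_left 2 natDegree_linear_le
    _ = 2 := by norm_num
  have hffdeg : (f * f).natDegree = f.natDegree + f.natDegree := natDegree_mul hf0 hf0
  have hlt : (L ^ 2).natDegree < (f * f).natDegree := by omega
  have hltdeg : (L ^ 2).degree < (f * f).degree := degree_lt_degree hlt
  set g : Polynomial ℝ := f * f - L ^ 2 with hgdef
  have hgdeg : g.degree = (f * f).degree := degree_sub_eq_left_of_degree_lt hltdeg
  have hgpos : 0 < g.degree := by
    rw [hgdeg, degree_eq_natDegree (mul_ne_zero hf0 hf0)]
    exact_mod_cast by omega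
  have hglead : 0 ≤ g.leadingCoeff := by
    rw [hgdef, leadingCoeff_sub_of_degree_lt hltdeg, leadingCoeff_mul]
    exact mul_self_nonneg _
  have htend := g.tendsto_atTop_of_leadingCoeff_nonneg hgpos hglead
  obtain ⟨N, hN⟩ := (htend.eventually_gt_atTop 0).exists_forall_of_atTop
  obtain ⟨n, hnS, hn⟩ := hS.exists_gt ⌈N⌉₊
  have hxN : N ≤ (n : ℝ) := le_trans (Nat.le_ceil N) (by exact_mod_cast hn.le)
  have hpos := hN (n : ℝ) hxN
  have hnonneg : (0 : ℝ) ≤ A * n + B := by positivity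
  have hsq : (f.eval (n : ℝ)) ^ 2 ≤ (A * n + B) ^ 2 := by
    rw [← sq_abs]
    exact pow_le_pow_left₀ (abs_nonneg _) (hf n hnS) 2
  have : g.eval (n : ℝ) ≤ 0 := by
    simp only [hgdef, hLdef, Polynomial.eval_sub, Polynomial.eval_mul, Polynomial.eval_pow, Polynomial.eval_add, Polynomial.eval_C, Polynomial.eval_X]
    nlinarith [hsq]
  linarith
/-- If `|a n + b| ≤ A n + B` for infinitely many naturals `n`, then `|a| ≤ A`. -/
lemma aux_lin_bound (a b A B : ℝ) {S : Set ℕ} (hS : S.Infinite)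
    (hf : ∀ n ∈ S, |a * n + b| ≤ A * n + B) : |a| ≤ A := by
  by_contra hc
  push_neg at hc
  obtain ⟨n, hnS, hn⟩ := hS.exists_gt ⌈(B + |b|) / (|a| - A)⌉₊
  have h1 : |a| * n ≤ |a * n + b| + |b| := by
    have := abs_sub_abs_le_abs_sub (a * n) (-b)
    have habs : |a * (n:ℝ)| = |a| * n := by
      rw [abs_mul, Nat.abs_cast]
    simp only [sub_neg_eq_add, abs_neg] at this
    linarith [this, habs.ge, habs.le]
  have h2 := hf n hnS
  have h3 : (|a| - A) * n ≤ B + |b| := by nlinarith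
  have h4 : (B + |b|) / (|a| - A) < (n : ℝ) := by
    calc (B + |b|) / (|a| - A) ≤ ⌈(B + |b|) / (|a| - A)⌉₊ := Nat.le_ceil _
    _ < (n : ℝ) := by exact_mod_cast hn
  have h5 : (B + |b|) < (|a| - A) * n := by
    rw [div_lt_iff₀ (by linarith)] at h4
    linarith
  linarith



open MvPolynomial

/-- If `h : ℕ₊ × ℕ₊ → ℝ` is weakly-described by a finite set of two-variable polynomials
(variable `0` = k, variable `1` = c) in each of which the coefficient of the monomial `k·c`
is zero, then `(k, c) ↦ h(k, c)/(k+1)` does not uniformly approximate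
`(k, c) ↦ kc/(k+1)`. -/
theorem no_kc_monomial_not_approx (h : ℕ → ℕ → ℝ) (F : Finset (MvPolynomial (Fin 2) ℝ))
    (hcoeff : ∀ p ∈ F,
      MvPolynomial.coeff (Finsupp.single 0 1 + Finsupp.single 1 1) p = 0)
    (hdesc : ∀ k c : ℕ, 0 < k → 0 < c →
      ∃ p ∈ F, eval ![(k : ℝ), (c : ℝ)] p = h k c) :
    ∀ ε : ℝ, 0 < ε → ∃ k c : ℕ, 0 < k ∧ 0 < c ∧
      |h k c / ((k : ℝ) + 1) - (k : ℝ) * (c : ℝ) / ((k : ℝ) + 1)| > ε := by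
  intro ε hε
  by_contra hcon
  push_neg at hcon
  -- clear the denominator
  have key : ∀ k c : ℕ, 0 < k → 0 < c → |h k c - (k : ℝ) * c| ≤ ε * ((k : ℝ) + 1) := by
    intro k c hk hc
    have hk1 : (0 : ℝ) < (k : ℝ) + 1 := by positivity
    have h1 := hcon k c hk hc
    rw [div_sub_div_same, abs_div, abs_of_pos hk1, div_le_iff₀ hk1] at h1
    linarith
  have hSpos : ({k : ℕ | 0 < k}).Infinite := Set.Ioi_infinite 0
  -- pigeonhole over c, then over k
  have stepA : ∀ c ∈ {c : ℕ | 0 < c}, ∃ p ∈ F,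
      {k | k ∈ {k : ℕ | 0 < k} ∧ eval ![(k : ℝ), (c : ℝ)] p = h k c}.Infinite := by
    intro c hc
    exact aux_pigeon F hSpos (fun k hk => hdesc k c hk hc)
  obtain ⟨p, hpF, hC⟩ := aux_pigeon F hSpos stepA
  -- set up the polynomial data
  set P : Polynomial (MvPolynomial (Fin 1) ℝ) := finSuccEquiv ℝ 1 p with hPdef
  set r : MvPolynomial (Fin 1) ℝ := P.coeff 1 with hrdef
  set s : Polynomial ℝ := (finSuccEquiv ℝ 0 r).map (MvPolynomial.eval (![] : Fin 0 → ℝ))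
    with hsdef
  have hs_eval : ∀ x : ℝ, s.eval x = eval ![x] r := by
    intro x
    exact (eval_eq_eval_mv_eval' ![] x r).symm
  -- key claim: |s.eval c - c| ≤ ε for all c in the infinite set
  have claim : ∀ c ∈ {c | c ∈ {c : ℕ | 0 < c} ∧
      {k | k ∈ {k : ℕ | 0 < k} ∧ eval ![(k : ℝ), (c : ℝ)] p = h k c}.Infinite},
      |s.eval (c : ℝ) - (c : ℝ)| ≤ ε := by
    rintro c ⟨hcpos, hK⟩
    set q : Polynomial ℝ := P.map (MvPolynomial.eval ![(c : ℝ)]) with hqdef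
    have hq_eval : ∀ k : ℕ, eval ![(k : ℝ), (c : ℝ)] p = q.eval (k : ℝ) := by
      intro k
      exact eval_eq_eval_mv_eval' ![(c : ℝ)] (k : ℝ) p
    set f : Polynomial ℝ := q - Polynomial.C (c : ℝ) * Polynomial.X with hfdef
    have hbound : ∀ k ∈ {k | k ∈ {k : ℕ | 0 < k} ∧ eval ![(k : ℝ), (c : ℝ)] p = h k c},
        |f.eval (k : ℝ)| ≤ ε * k + ε := by
      rintro k ⟨hkpos, heq⟩
      have : f.eval (k : ℝ) = h k c - (k : ℝ) * c := by
        simp only [hfdef, Polynomial.eval_sub, Polynomial.eval_mul, Polynomial.eval_C,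
          Polynomial.eval_X, ← hq_eval k, heq]
        ring
      rw [this]
      have := key k c hkpos hcpos
      linarith
    have hdeg : f.natDegree ≤ 1 := aux_deg_le_one f ε ε hε.le hε hK hbound
    have hdeg' : f.degree ≤ 1 := by
      calc f.degree ≤ (f.natDegree : WithBot ℕ) := Polynomial.degree_le_natDegree
      _ ≤ 1 := by exact_mod_cast hdeg
    have hform := Polynomial.eq_X_add_C_of_degree_le_one hdeg'
    have heval : ∀ k ∈ {k | k ∈ {k : ℕ | 0 < k} ∧ eval ![(k : ℝ), (c : ℝ)] p = h k c},
        |f.coeff 1 * (k : ℝ) + f.coeff 0| ≤ ε * k + ε := by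
      intro k hk
      have := hbound k hk
      rw [hform] at this
      simpa using this
    have hlin := aux_lin_bound (f.coeff 1) (f.coeff 0) ε ε hK heval
    have hcoeff1 : f.coeff 1 = s.eval (c : ℝ) - (c : ℝ) := by
      rw [hs_eval]
      simp [hfdef, hqdef, Polynomial.coeff_map, hrdef]
    rwa [hcoeff1] at hlin
  -- final contradiction via the polynomial s - X
  set t : Polynomial ℝ := s - Polynomial.X with htdef
  have hbound2 : ∀ c ∈ {c | c ∈ {c : ℕ | 0 < c} ∧
      {k | k ∈ {k : ℕ | 0 < k} ∧ eval ![(k : ℝ), (c : ℝ)] p = h k c}.Infinite},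
      |t.eval (c : ℝ)| ≤ 0 * c + ε := by
    intro c hc
    have := claim c hc
    simp only [htdef, Polynomial.eval_sub, Polynomial.eval_X, zero_mul, zero_add]
    exact this
  have hdeg2 : t.natDegree ≤ 1 := aux_deg_le_one t 0 ε le_rfl hε hC hbound2
  have hdeg2' : t.degree ≤ 1 := by
    calc t.degree ≤ (t.natDegree : WithBot ℕ) := Polynomial.degree_le_natDegree
    _ ≤ 1 := by exact_mod_cast hdeg2
  have hform2 := Polynomial.eq_X_add_C_of_degree_le_one hdeg2'
  have heval2 : ∀ c ∈ {c | c ∈ {c : ℕ | 0 < c} ∧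
      {k | k ∈ {k : ℕ | 0 < k} ∧ eval ![(k : ℝ), (c : ℝ)] p = h k c}.Infinite},
      |t.coeff 1 * (c : ℝ) + t.coeff 0| ≤ 0 * c + ε := by
    intro c hc
    have := hbound2 c hc
    rw [hform2] at this
    simpa using this
  have hlin2 := aux_lin_bound (t.coeff 1) (t.coeff 0) 0 ε hC heval2
  have ht1 : t.coeff 1 = 0 := by
    have := abs_nonneg (t.coeff 1)
    have habs : |t.coeff 1| = 0 := le_antisymm hlin2 this
    exact abs_eq_zero.mp habs
  -- but t.coeff 1 = s.coeff 1 - 1 = -1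
  have hs1 : s.coeff 1 = 0 := by
    have h1 : s.coeff 1 = MvPolynomial.eval (![] : Fin 0 → ℝ)
        ((finSuccEquiv ℝ 0 r).coeff 1) := by
      simp [hsdef, Polynomial.coeff_map]
    have h2 : ((finSuccEquiv ℝ 0 r).coeff 1) =
        MvPolynomial.C (MvPolynomial.coeff 0 ((finSuccEquiv ℝ 0 r).coeff 1)) :=
      MvPolynomial.eq_C_of_isEmpty _
    have h3 : MvPolynomial.coeff 0 ((finSuccEquiv ℝ 0 r).coeff 1) =
        MvPolynomial.coeff (Finsupp.cons 1 (0 : Fin 0 →₀ ℕ)) r :=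
      finSuccEquiv_coeff_coeff 0 r 1
    have h4 : (Finsupp.cons 1 (0 : Fin 0 →₀ ℕ)) = Finsupp.single (0 : Fin 1) 1 := by
      ext i
      fin_cases i
      simp
    have h5 : MvPolynomial.coeff (Finsupp.single (0 : Fin 1) 1) r =
        MvPolynomial.coeff (Finsupp.cons 1 (Finsupp.single (0 : Fin 1) 1)) p :=
      finSuccEquiv_coeff_coeff (Finsupp.single 0 1) p 1
    have h6 : (Finsupp.cons 1 (Finsupp.single (0 : Fin 1) 1)) =
        Finsupp.single (0 : Fin 2) 1 + Finsupp.single (1 : Fin 2) 1 := by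
      ext i
      refine Fin.cases ?_ ?_ i
      · simp
      · intro j
        fin_cases j
        rw [Finsupp.cons_succ]
        simp
    rw [h1, h2]
    rw [h3, h4, h5, h6, hcoeff p hpF]
    simp
  have : t.coeff 1 = -1 := by
    simp [htdef, Polynomial.coeff_sub, hs1]
  rw [ht1] at this
  norm_num at this
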